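/- Merged DtN formula: under the hypotheses of the merge (the two block systems of the previous statement, with T^α₃₃ − T^β₃₃ invertible), the exterior fluxes satisfy (v₁, v₂) = T^τ (u₁, u₂) where T^τ = blockDiag(T^α₁₁, T^β₂₂) + col(T^α₁₃, T^β₂₃) · (T^α₃₃ − T^β₃₃)⁻¹ · row(−T^α₃₁, T^β₃₂). -/

import Mathlib

theorem merged_dtn_formula
    {n₁ n₂ n₃ : Type*} [Fintype n₁] [Fintype n₂] [Fintype n₃] [DecidableEq n₃]
    (Tα11 : Matrix n₁ n₁ ℝ) (Tα13 : Matrix n₁ n₃ ℝ)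
    (Tα31 : Matrix n₃ n₁ ℝ) (Tα33 : Matrix n₃ n₃ ℝ)
    (Tβ22 : Matrix n₂ n₂ ℝ) (Tβ23 : Matrix n₂ n₃ ℝ)
    (Tβ32 : Matrix n₃ n₂ ℝ) (Tβ33 : Matrix n₃ n₃ ℝ)
    (u₁ : n₁ → ℝ) (u₂ : n₂ → ℝ) (u₃ : n₃ → ℝ)
    (v₁ : n₁ → ℝ) (v₂ : n₂ → ℝ) (v₃ : n₃ → ℝ)
    (h1 : v₁ = Tα11.mulVec u₁ + Tα13.mulVec u₃)
    (h2 : v₃ = Tα31.mulVec u₁ + Tα33.mulVec u₃)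
    (h3 : v₂ = Tβ22.mulVec u₂ + Tβ23.mulVec u₃)
    (h4 : v₃ = Tβ32.mulVec u₂ + Tβ33.mulVec u₃)
    (hUnit : IsUnit (Tα33 - Tβ33)) :
    Sum.elim v₁ v₂ =
      (Matrix.fromBlocks Tα11 0 0 Tβ22 +
        Matrix.fromRows Tα13 Tβ23 * (Tα33 - Tβ33)⁻¹ *
          Matrix.fromCols (-Tα31) Tβ32).mulVec (Sum.elim u₁ u₂) := by
  have key : (Tα33 - Tβ33).mulVec u₃ =
      (Matrix.fromCols (-Tα31) Tβ32).mulVec (Sum.elim u₁ u₂) := by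
    rw [Matrix.fromCols_mulVec_sumElim, Matrix.sub_mulVec, Matrix.neg_mulVec]
    have h := h2.symm.trans h4
    funext i
    have hi := congrFun h i
    simp only [Pi.add_apply, Pi.sub_apply, Pi.neg_apply] at hi ⊢
    linarith
  have hu3 : u₃ = ((Tα33 - Tβ33)⁻¹ *
      Matrix.fromCols (-Tα31) Tβ32).mulVec (Sum.elim u₁ u₂) := by
    rw [← Matrix.mulVec_mulVec, ← key, Matrix.mulVec_mulVec,
      Matrix.nonsing_inv_mul _ ((Matrix.isUnit_iff_isUnit_det _).mp hUnit),
      Matrix.one_mulVec]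
  rw [Matrix.add_mulVec, Matrix.fromBlocks_mulVec, Matrix.mul_assoc,
    ← Matrix.mulVec_mulVec, ← hu3, Matrix.fromRows_mulVec]
  ext (i | i) <;>
    simp [h1, h3, Matrix.zero_mulVec]
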